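/- (Total turnings are bounded below when the curvature is bounded below by −1.) For any p, q ∈ ℂ with Im p > 0 and Im q > 0, and any w₀, w₁ ∈ ℂ with |w₀| = |w₁| = 1, there exists τ₀ ∈ ℝ such that every C² regular curve γ : [0,1] → ℂ with Im γ(t) > 0 for all t, γ(0) = p, γ(1) = q, γ'(0)/|γ'(0)| = w₀, γ'(1)/|γ'(1)| = w₁, and hyperbolic geodesic curvature κ(t) > −1 for all t, has total turning at least τ₀. -/

import Mathlib

open Set

/-- Euclidean curvature of a plane curve `γ : ℝ → ℂ`. -/
noncomputable def kappaE (γ : ℝ → ℂ) (t : ℝ) : ℝ :=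
  ((starRingEnd ℂ) (deriv γ t) * deriv (deriv γ) t).im / ‖deriv γ t‖ ^ 3

/-- Hyperbolic geodesic curvature in the upper half-plane model. -/
noncomputable def kappaH (γ : ℝ → ℂ) (t : ℝ) : ℝ :=
  (γ t).im * kappaE γ t + (deriv γ t).re / ‖deriv γ t‖

/-- `θ` is a continuous argument for the unit tangent of `γ` on `[0,1]`. -/
def IsArgument (γ : ℝ → ℂ) (θ : ℝ → ℝ) : Prop :=
  ContinuousOn θ (Icc 0 1) ∧
  ∀ t ∈ Icc (0:ℝ) 1,
    deriv γ t / (‖deriv γ t‖ : ℂ) = Complex.exp (θ t * Complex.I)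

/-- Total turnings are bounded below when the curvature is bounded below by `-1`. -/
theorem total_turning_bounded_below (p q : ℂ) (hp : 0 < p.im) (hq : 0 < q.im)
    (w₀ w₁ : ℂ) (hw₀ : ‖w₀‖ = 1) (hw₁ : ‖w₁‖ = 1) :
    ∃ τ₀ : ℝ, ∀ γ : ℝ → ℂ, ContDiff ℝ 2 γ →
      (∀ t ∈ Icc (0:ℝ) 1, deriv γ t ≠ 0 ∧ 0 < (γ t).im ∧ -1 < kappaH γ t) →
      γ 0 = p → γ 1 = q →
      deriv γ 0 / (‖deriv γ 0‖ : ℂ) = w₀ →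
      deriv γ 1 / (‖deriv γ 1‖ : ℂ) = w₁ →
      ∀ θ : ℝ → ℝ, IsArgument γ θ → τ₀ ≤ θ 1 - θ 0 := by
  refine ⟨-(2 * Real.pi), ?_⟩
  intro γ hγ hreg h0 h1 hw0' hw1' θ hθ
  by_contra hcon
  push_neg at hcon
  obtain ⟨hθc, hθe⟩ := hθ
  have hπ := Real.pi_pos
  -- choose a crossing level c ≡ π (mod 2π) with θ 1 < c ≤ θ 0
  set k : ℤ := ⌊(θ 0 - Real.pi) / (2 * Real.pi)⌋ with hkdef
  set c : ℝ := Real.pi + k * (2 * Real.pi) with hcdef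
  have hc1 : c ≤ θ 0 := by
    have h := Int.floor_le ((θ 0 - Real.pi) / (2 * Real.pi))
    rw [le_div_iff₀ (by positivity)] at h
    rw [hcdef]; linarith
  have hc2 : θ 0 - 2 * Real.pi < c := by
    have h := Int.lt_floor_add_one ((θ 0 - Real.pi) / (2 * Real.pi))
    rw [div_lt_iff₀ (by positivity)] at h
    rw [hcdef]; push_cast at h ⊢; linarith
  have hc3 : θ 1 < c := by linarith
  -- the last time θ is ≥ c
  set S : Set ℝ := Icc 0 1 ∩ θ ⁻¹' (Ici c) with hSdef
  have hScl : IsClosed S := hθc.preimage_isClosed_of_isClosed isClosed_Icc isClosed_Ici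
  have h0S : (0:ℝ) ∈ S := ⟨⟨le_refl 0, zero_le_one⟩, hc1⟩
  have hbdd : BddAbove S := ⟨1, fun t ht => ht.1.2⟩
  set T : ℝ := sSup S with hTdef
  have hTS : T ∈ S := hScl.csSup_mem ⟨0, h0S⟩ hbdd
  have hT01 : T ∈ Icc (0:ℝ) 1 := hTS.1
  have hTc : c ≤ θ T := hTS.2
  have hT1 : T < 1 := lt_of_le_of_ne hT01.2 (by
    intro h; rw [h] at hTc; linarith)
  have hlt : ∀ t, T < t → t ≤ 1 → θ t < c := by
    intro t ht h1t
    by_contra hle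
    push_neg at hle
    have htS : t ∈ S := ⟨⟨le_trans hT01.1 ht.le, h1t⟩, hle⟩
    exact absurd (le_csSup hbdd htS) (not_le.mpr ht)
  have hIoo_sub : Ioo T 1 ⊆ Icc (0:ℝ) 1 := fun t ht => ⟨le_trans hT01.1 ht.1.le, ht.2.le⟩
  haveI : (nhdsWithin T (Ioo T 1)).NeBot := left_nhdsWithin_Ioo_neBot hT1
  have hθTtend : Filter.Tendsto θ (nhdsWithin T (Ioo T 1)) (nhds (θ T)) :=
    (hθc.continuousWithinAt hT01).mono hIoo_sub
  have hθTle : θ T ≤ c := by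
    refine le_of_tendsto hθTtend ?_
    filter_upwards [self_mem_nhdsWithin] with t ht
    exact (hlt t ht.1 ht.2.le).le
  have hθT_eq : θ T = c := le_antisymm hθTle hTc
  -- tangent at T points in the -x direction
  set a : ℂ := deriv γ T with hadef
  set b : ℂ := deriv (deriv γ) T with hbdef
  set r : ℝ := ‖a‖ with hrdef
  have ha0 : a ≠ 0 := (hreg T hT01).1
  have hr : 0 < r := by rw [hrdef]; exact norm_pos_iff.mpr ha0
  have hrne : (r : ℂ) ≠ 0 := by exact_mod_cast hr.ne'
  have hexpc : Complex.exp ((θ T : ℝ) * Complex.I) = -1 := by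
    rw [hθT_eq, hcdef]
    push_cast
    rw [add_mul, Complex.exp_add, Complex.exp_pi_mul_I,
      show ((k : ℂ) * (2 * (Real.pi : ℂ)) * Complex.I) = k * (2 * (Real.pi:ℂ) * Complex.I) by ring,
      Complex.exp_int_mul_two_pi_mul_I]
    ring
  have haR : a = -(r : ℂ) := by
    have h := hθe T hT01
    rw [hexpc, div_eq_iff hrne] at h
    rw [hadef, h]; ring
  have haim : a.im = 0 := by rw [haR]; simp
  -- second derivative and curvature
  have h2 : ContDiff ℝ (1+1 : ℕ) γ := by exact_mod_cast hγ
  have hdγ : Differentiable ℝ (deriv γ) :=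
    (((contDiff_succ_iff_deriv (n := 1)).mp (by exact_mod_cast h2)).2.2).differentiable one_ne_zero
  have hA' : HasDerivAt (deriv γ) b T := (hdγ T).hasDerivAt
  have hy : 0 < (γ T).im := (hreg T hT01).2.1
  have hbim : b.im < 0 := by
    have hk2 := (hreg T hT01).2.2
    rw [kappaH, kappaE] at hk2
    rw [← hadef, ← hbdef, ← hrdef] at hk2
    have hconj : ((starRingEnd ℂ) a * b).im = -r * b.im := by
      rw [haR]; simp [Complex.mul_im]
    rw [hconj] at hk2
    have hre : a.re = -r := by rw [haR]; simp
    rw [hre] at hk2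
    have hrr : -r / r = -1 := by field_simp
    rw [hrr] at hk2
    have hX : 0 < (γ T).im * (-r * b.im / r ^ 3) := by linarith
    have hX2 : 0 < -r * b.im / r ^ 3 := by
      rcases mul_pos_iff.mp hX with ⟨_, h⟩ | ⟨h, _⟩
      · exact h
      · linarith
    have hX3 : 0 < -r * b.im := by
      rcases div_pos_iff.mp hX2 with ⟨h, _⟩ | ⟨_, h⟩
      · exact h
      · nlinarith [pow_pos hr 3]
    nlinarith
  -- the function u = - sin θ and its derivative at T
  set u : ℝ → ℝ := fun t => -(deriv γ t).im /
    Real.sqrt ((deriv γ t).re * (deriv γ t).re + (deriv γ t).im * (deriv γ t).im) with hudef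
  have him : HasDerivAt (fun t => (deriv γ t).im) b.im T := by
    exact Complex.imCLM.hasFDerivAt.comp_hasDerivAt T hA'
  have hre' : HasDerivAt (fun t => (deriv γ t).re) b.re T := by
    exact Complex.reCLM.hasFDerivAt.comp_hasDerivAt T hA'
  have hnsq : HasDerivAt (fun t => (deriv γ t).re * (deriv γ t).re + (deriv γ t).im * (deriv γ t).im)
      ((b.re * a.re + a.re * b.re) + (b.im * a.im + a.im * b.im)) T :=
    (hre'.mul hre').add (him.mul him)
  have hfx : a.re * a.re + a.im * a.im ≠ 0 := by
    have : a.re * a.re + a.im * a.im = Complex.normSq a := by rw [Complex.normSq_apply]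
    rw [this]
    exact (Complex.normSq_pos.mpr ha0).ne'
  have hsr : Real.sqrt (a.re * a.re + a.im * a.im) = r := by
    rw [hrdef, Complex.norm_def, Complex.normSq_apply]
  have hden_ne : Real.sqrt (a.re * a.re + a.im * a.im) ≠ 0 := by rw [hsr]; exact hr.ne'
  have hsqrt := hnsq.sqrt hfx
  have huD : HasDerivAt u (-b.im * r / r ^ 2) T := by
    have h := (him.neg).div hsqrt hden_ne
    convert h using 1
    · rfl
    · rfl
    · rfl
    simp only [Pi.neg_apply]
    rw [hsr, haim]; ring
  have hupos : 0 < -b.im * r / r ^ 2 := by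
    apply div_pos (by nlinarith) (by positivity)
  have hu0 : u T = 0 := by
    rw [hudef]; simp only [← hadef, haim]; simp
  -- contradiction via the slope to the right of T
  have hslope := hasDerivAt_iff_tendsto_slope.mp huD
  have hmono : nhdsWithin T (Ioo T 1) ≤ nhdsWithin T {T}ᶜ :=
    nhdsWithin_mono T (fun t ht => ht.1.ne')
  have hev1 : ∀ᶠ t in nhdsWithin T (Ioo T 1), 0 < slope u T t :=
    (hslope.mono_left hmono).eventually (eventually_gt_nhds hupos)
  have hev2 : ∀ᶠ t in nhdsWithin T (Ioo T 1), θ t ∈ Ioo (c - Real.pi) (c + Real.pi) := by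
    have h := hθT_eq ▸ hθTtend
    exact h (Ioo_mem_nhds (by linarith) (by linarith))
  have hev3 : ∀ᶠ t in nhdsWithin T (Ioo T 1), t ∈ Ioo T 1 := self_mem_nhdsWithin
  obtain ⟨t, hsl, hθt, htI⟩ := (hev1.and (hev2.and hev3)).exists
  -- u t > 0 from the slope
  have htT : 0 < t - T := sub_pos.mpr htI.1
  have hut_pos : 0 < u t := by
    rw [slope_def_field, hu0, sub_zero] at hsl
    rcases div_pos_iff.mp hsl with ⟨h, _⟩ | ⟨_, h⟩
    · exact h
    · linarith
  -- u t < 0 since θ t ∈ (c - π, c)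
  have htmem : t ∈ Icc (0:ℝ) 1 := hIoo_sub htI
  have hAt : deriv γ t ≠ 0 := (hreg t htmem).1
  have hrt : 0 < ‖deriv γ t‖ := norm_pos_iff.mpr hAt
  have hsin : (deriv γ t).im / ‖deriv γ t‖ = Real.sin (θ t) := by
    have h := congrArg Complex.im (hθe t htmem)
    simpa [Complex.div_ofReal_im, Complex.exp_ofReal_mul_I_im] using h
  have hsq : Real.sqrt ((deriv γ t).re * (deriv γ t).re + (deriv γ t).im * (deriv γ t).im)
      = ‖deriv γ t‖ := by
    rw [Complex.norm_def, Complex.normSq_apply]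
  have hut_eq : u t = -Real.sin (θ t) := by
    rw [hudef]
    simp only []
    rw [hsq, neg_div, hsin]
  have hθtc : θ t < c := hlt t htI.1 htI.2.le
  have hsinpos : 0 < Real.sin (θ t) := by
    have heq : Real.sin (θ t) = Real.sin (θ t - k * (2 * Real.pi)) := by
      rw [← Real.sin_add_int_mul_two_pi (θ t - k * (2 * Real.pi)) k, sub_add_cancel]
    rw [heq]
    apply Real.sin_pos_of_pos_of_lt_pi
    · have := hθt.1; rw [hcdef] at this; linarith
    · rw [hcdef] at hθtc; linarith
  rw [hut_eq] at hut_pos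
  linarith
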